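/- Let W ∈ L²([0,1]²) be nonnegative with ess-sup_x ∫₀¹ W(x,y) dy ≤ W₂ < ∞, let f(u,t) be Lipschitz in u with constant L_f, and D Lipschitz with constant L_D. Then the map R(v)(x) = f(v(x), t) + ∫₀¹ W(x,y) D(v(y) − v(x)) dy is Lipschitz continuous on L²([0,1]) with Lipschitz constant at most L_f + L_D(‖W‖_{L²([0,1]²)} + W₂), uniformly in t. -/

import Mathlib

open MeasureTheory Set
open scoped NNReal ENNReal

/-- The unit interval `(0,1]` (up to a null set equal to `[0,1]`). -/
noncomputable def unitI : Set ℝ := Set.Ioc 0 1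

/-- The grid cell `((⌈nx⌉-1)/n, ⌈nx⌉/n]` of the uniform `n`-partition containing `x`. -/
noncomputable def cell (n : ℕ) (x : ℝ) : Set ℝ :=
  Set.Ioc ((⌈(n : ℝ) * x⌉ - 1 : ℝ) / n) ((⌈(n : ℝ) * x⌉ : ℝ) / n)

/-- Step-function approximation of a kernel `W` on the uniform `n × n` grid:
`W_n(x,y) = n² ∫_{I_{n,i} × I_{n,j}} W` for `(x,y) ∈ I_{n,i} × I_{n,j}`. -/
noncomputable def stepApprox (n : ℕ) (W : ℝ → ℝ → ℝ) (x y : ℝ) : ℝ :=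
  (n : ℝ) ^ 2 * ∫ p in (cell n x) ×ˢ (cell n y), W p.1 p.2

/-- The `L²([0,1]²)` norm of a kernel. -/
noncomputable def l2norm2 (V : ℝ → ℝ → ℝ) : ℝ :=
  Real.sqrt (∫ p in unitI ×ˢ unitI, (V p.1 p.2) ^ 2)

/-- The `L²([0,1])` norm of a function. -/
noncomputable def l2norm (v : ℝ → ℝ) : ℝ :=
  Real.sqrt (∫ x in unitI, (v x) ^ 2)

/-- The nonlocal operator `K_V(v)(x) = ∫₀¹ V(x,y) D(v(y) - v(x)) dy`. -/
noncomputable def Kop (V : ℝ → ℝ → ℝ) (D : ℝ → ℝ) (v : ℝ → ℝ) (x : ℝ) : ℝ :=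
  ∫ y in unitI, V x y * D (v y - v x)

section Helpers

variable {α : Type*} [MeasurableSpace α] {μ : Measure α}

/-- product of two L² functions is integrable (AM-GM). -/
lemma int_mul {f g : α → ℝ} (hf : MemLp f 2 μ) (hg : MemLp g 2 μ) :
    Integrable (fun x => f x * g x) μ := by
  refine Integrable.mono' (g := fun x => (1/2 : ℝ) * (f x ^ 2 + g x ^ 2))
    ((hf.integrable_sq.add hg.integrable_sq).const_mul (1/2 : ℝ))
    (hf.1.mul hg.1) (ae_of_all _ fun x => ?_)
  rw [Real.norm_eq_abs, abs_mul]
  nlinarith [sq_nonneg (|f x| - |g x|), sq_abs (f x), sq_abs (g x), abs_nonneg (f x),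
    abs_nonneg (g x)]

/-- l2-type norm via eLpNorm. -/
lemma sqrt_sq_int_eq {g : α → ℝ} (hg : MemLp g 2 μ) :
    Real.sqrt (∫ x, g x ^ 2 ∂μ) = (eLpNorm g 2 μ).toReal := by
  rw [hg.eLpNorm_eq_integral_rpow_norm two_ne_zero ENNReal.ofNat_ne_top,
    ENNReal.toReal_ofReal (by positivity)]
  simp only [ENNReal.toReal_ofNat]
  have : ∫ a, ‖g a‖ ^ (2 : ℝ) ∂μ = ∫ x, g x ^ 2 ∂μ := by
    simp [Real.rpow_two, sq_abs]
  rw [this, Real.sqrt_eq_rpow]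
  norm_num

/-- Cauchy-Schwarz for nonnegative functions. -/
lemma cs_int {f g : α → ℝ} (hf : MemLp f 2 μ) (hg : MemLp g 2 μ)
    (hfn : 0 ≤ᵐ[μ] f) (hgn : 0 ≤ᵐ[μ] g) :
    ∫ a, f a * g a ∂μ ≤ Real.sqrt (∫ a, f a ^ 2 ∂μ) * Real.sqrt (∫ a, g a ^ 2 ∂μ) := by
  have hpq : Real.HolderConjugate 2 2 := Real.HolderConjugate.two_two
  have h := integral_mul_le_Lp_mul_Lq_of_nonneg hpq hfn hgn
    (by simpa using hf) (by simpa using hg)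
  have e1 : ∫ a, f a ^ (2:ℝ) ∂μ = ∫ a, f a ^ 2 ∂μ := by simp [Real.rpow_two]
  have e2 : ∫ a, g a ^ (2:ℝ) ∂μ = ∫ a, g a ^ 2 ∂μ := by simp [Real.rpow_two]
  rw [e1, e2] at h
  calc ∫ a, f a * g a ∂μ ≤ (∫ a, f a ^ 2 ∂μ) ^ (1/2:ℝ) * (∫ a, g a ^ 2 ∂μ) ^ (1/2:ℝ) := h
    _ = _ := by rw [← Real.sqrt_eq_rpow, ← Real.sqrt_eq_rpow]

end Helpers

/-- Triangle inequality for `l2norm`. -/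
lemma l2norm_add_le {f g : ℝ → ℝ} (hf : MemLp f 2 (volume.restrict unitI))
    (hg : MemLp g 2 (volume.restrict unitI)) :
    l2norm (fun x => f x + g x) ≤ l2norm f + l2norm g := by
  have h := eLpNorm_add_le hf.1 hg.1 one_le_two
  have e : l2norm (fun x => f x + g x)
      = (eLpNorm (f + g) 2 (volume.restrict unitI)).toReal := sqrt_sq_int_eq (hf.add hg)
  have ef : l2norm f = (eLpNorm f 2 (volume.restrict unitI)).toReal := sqrt_sq_int_eq hf
  have eg : l2norm g = (eLpNorm g 2 (volume.restrict unitI)).toReal := sqrt_sq_int_eq hg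
  rw [e, ef, eg]
  calc (eLpNorm (f + g) 2 (volume.restrict unitI)).toReal
      ≤ (eLpNorm f 2 (volume.restrict unitI) + eLpNorm g 2 (volume.restrict unitI)).toReal :=
        ENNReal.toReal_mono (by exact ENNReal.add_ne_top.2 ⟨hf.2.ne, hg.2.ne⟩) h
    _ = _ := ENNReal.toReal_add hf.2.ne hg.2.ne

/-- Monotonicity of `l2norm` under a.e. domination. -/
lemma l2norm_mono {f g : ℝ → ℝ} (hfm : AEStronglyMeasurable f (volume.restrict unitI))
    (hg : MemLp g 2 (volume.restrict unitI))
    (h : ∀ᵐ x ∂(volume.restrict unitI), |f x| ≤ g x) :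
    l2norm f ≤ l2norm g := by
  have h' : ∀ᵐ x ∂(volume.restrict unitI), ‖f x‖ ≤ ‖g x‖ := by
    filter_upwards [h] with x hx
    rw [Real.norm_eq_abs, Real.norm_eq_abs]
    exact hx.trans (le_abs_self _)
  have hfmem : MemLp f 2 (volume.restrict unitI) := hg.of_le hfm h'
  rw [l2norm, l2norm, sqrt_sq_int_eq hfmem, sqrt_sq_int_eq hg]
  exact ENNReal.toReal_mono hg.2.ne (eLpNorm_mono_ae h')

/-- Scaling of `l2norm`. -/
lemma l2norm_const_mul (c : ℝ) (h : ℝ → ℝ) :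
    l2norm (fun x => c * h x) = |c| * l2norm h := by
  unfold l2norm
  simp_rw [mul_pow]
  rw [integral_const_mul, Real.sqrt_mul (sq_nonneg c), Real.sqrt_sq_eq_abs]

lemma l2norm_abs (h : ℝ → ℝ) : l2norm (fun x => |h x|) = l2norm h := by
  unfold l2norm; simp [sq_abs]

theorem stmt6
    (W : ℝ → ℝ → ℝ) (hWnn : ∀ x y, 0 ≤ W x y)
    (hW : MeasureTheory.MemLp (fun p : ℝ × ℝ => W p.1 p.2) 2
      ((volume : Measure (ℝ × ℝ)).restrict (unitI ×ˢ unitI)))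
    (W2 : ℝ) (hdeg : ∀ᵐ x ∂(volume.restrict unitI), ∫ y in unitI, W x y ≤ W2)
    (f : ℝ → ℝ → ℝ) (Lf : ℝ) (hf : ∀ t a b, |f a t - f b t| ≤ Lf * |a - b|)
    (D : ℝ → ℝ) (LD : ℝ) (hD : ∀ a b, |D a - D b| ≤ LD * |a - b|) :
    ∀ t : ℝ, ∀ u v : ℝ → ℝ,
      MeasureTheory.MemLp u 2 (volume.restrict unitI) →
      MeasureTheory.MemLp v 2 (volume.restrict unitI) →
      l2norm (fun x => (f (u x) t + Kop W D u x) - (f (v x) t + Kop W D v x)) ≤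
        (Lf + LD * (l2norm2 W + W2)) * l2norm (fun x => u x - v x) := by
  intro t u v hu hv
  set μ : Measure ℝ := volume.restrict unitI with hμdef
  haveI hμfin : IsFiniteMeasure μ := by
    constructor
    rw [hμdef, Measure.restrict_apply_univ]
    simp [unitI]
  -- basic nonnegativity of constants
  have hLD : 0 ≤ LD := by
    have h := hD 1 0
    simp only [sub_zero, abs_one, mul_one] at h
    exact (abs_nonneg _).trans h
  have hLf : 0 ≤ Lf := by
    have h := hf t 1 0
    simp only [sub_zero, abs_one, mul_one] at h
    exact (abs_nonneg _).trans h
  have hμne : μ ≠ 0 := by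
    intro h0
    have : (μ univ).toReal = 1 := by
      rw [hμdef, Measure.restrict_apply_univ]; simp [unitI]
    rw [h0] at this; simp at this
  haveI : (MeasureTheory.ae μ).NeBot := ae_neBot.mpr hμne
  have hW2 : 0 ≤ W2 := by
    obtain ⟨x, hx⟩ := hdeg.exists
    exact le_trans (integral_nonneg fun y => hWnn x y) hx
  -- continuity of D and f(·,t)
  have hDcont : Continuous D := by
    refine (LipschitzWith.of_dist_le_mul (K := LD.toNNReal) fun a b => ?_).continuous
    rw [Real.dist_eq, Real.dist_eq, Real.coe_toNNReal LD hLD]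
    exact hD a b
  have hfcont : Continuous (fun a => f a t) := by
    refine (LipschitzWith.of_dist_le_mul (K := Lf.toNNReal) fun a b => ?_).continuous
    rw [Real.dist_eq, Real.dist_eq, Real.coe_toNNReal Lf hLf]
    exact hf t a b
  -- rewrite the product measure
  have hprod : ((volume : Measure (ℝ × ℝ)).restrict (unitI ×ˢ unitI)) = μ.prod μ := by
    rw [hμdef, Measure.volume_eq_prod, ← Measure.prod_restrict]
  have hWp : MemLp (fun p : ℝ × ℝ => W p.1 p.2) 2 (μ.prod μ) := hprod ▸ hW
  have hWsq : Integrable (fun p : ℝ × ℝ => W p.1 p.2 ^ 2) (μ.prod μ) := hWp.integrable_sq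
  -- the difference function
  set w : ℝ → ℝ := fun x => u x - v x with hwdef
  have hw : MemLp w 2 μ := hu.sub hv
  have hwa : MemLp (fun x => |w x|) 2 μ := by
    have := hw.norm
    simpa [Real.norm_eq_abs] using this
  set N : ℝ := l2norm w with hNdef
  have hN0 : 0 ≤ N := Real.sqrt_nonneg _
  -- sections of W
  have hWsec : ∀ᵐ x ∂μ, MemLp (fun y => W x y) 2 μ := by
    filter_upwards [hWsq.prod_right_ae, hWp.1.prodMk_left] with x h1 h2
    exact (memLp_two_iff_integrable_sq h2).2 h1
  -- the auxiliary function g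
  set g : ℝ → ℝ := fun x => ∫ y, W x y * |w y| ∂μ with hgdef
  have hgm : AEStronglyMeasurable g μ := by
    have : AEStronglyMeasurable (fun p : ℝ × ℝ => W p.1 p.2 * |w p.2|) (μ.prod μ) :=
      hWp.1.mul hwa.1.comp_snd
    exact this.integral_prod_right'
  have hgnn : ∀ x, 0 ≤ g x := fun x =>
    integral_nonneg fun y => mul_nonneg (hWnn x y) (abs_nonneg _)
  -- q x = ∫ W x y ^ 2 dy
  set q : ℝ → ℝ := fun x => ∫ y, W x y ^ 2 ∂μ with hqdef
  have hqnn : ∀ x, 0 ≤ q x := fun x => integral_nonneg fun y => sq_nonneg _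
  have hqint : Integrable q μ := hWsq.integral_prod_left
  have hQ : ∫ x, q x ∂μ = ∫ p : ℝ × ℝ, W p.1 p.2 ^ 2 ∂(μ.prod μ) :=
    (integral_prod _ hWsq).symm
  have hQnn : 0 ≤ ∫ p : ℝ × ℝ, W p.1 p.2 ^ 2 ∂(μ.prod μ) :=
    integral_nonneg fun p => sq_nonneg _
  -- pointwise Cauchy-Schwarz for g
  have hgcs : ∀ᵐ x ∂μ, g x ≤ Real.sqrt (q x) * N := by
    filter_upwards [hWsec] with x hx
    have h := cs_int hx hwa (ae_of_all _ fun y => hWnn x y) (ae_of_all _ fun y => abs_nonneg _)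
    have e : ∫ y, |w y| ^ 2 ∂μ = ∫ y, w y ^ 2 ∂μ := by simp [sq_abs]
    rw [e] at h
    exact h
  have hgsq_bound : ∀ᵐ x ∂μ, g x ^ 2 ≤ q x * N ^ 2 := by
    filter_upwards [hgcs] with x hx
    have h1 : g x ^ 2 ≤ (Real.sqrt (q x) * N) ^ 2 := by
      apply sq_le_sq' _ hx
      linarith [hgnn x, mul_nonneg (Real.sqrt_nonneg (q x)) hN0]
    calc g x ^ 2 ≤ (Real.sqrt (q x) * N) ^ 2 := h1
      _ = q x * N ^ 2 := by rw [mul_pow, Real.sq_sqrt (hqnn x)]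
  have hg2 : MemLp g 2 μ := by
    refine (memLp_two_iff_integrable_sq hgm).2 ?_
    refine Integrable.mono' (hqint.mul_const (N ^ 2))
      (by exact hgm.pow 2) ?_
    filter_upwards [hgsq_bound] with x hx
    rw [Real.norm_eq_abs, abs_of_nonneg (sq_nonneg _)]
    exact hx
  -- the L² bound on g : ‖g‖ ≤ ‖W‖₂ N
  have hgl2 : l2norm g ≤ l2norm2 W * N := by
    have h1 : ∫ x, g x ^ 2 ∂μ ≤ ∫ x, q x * N ^ 2 ∂μ := by
      refine integral_mono_ae ((memLp_two_iff_integrable_sq hgm).1 hg2)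
        (hqint.mul_const _) hgsq_bound
    have h2 : ∫ x, q x * N ^ 2 ∂μ = (∫ p : ℝ × ℝ, W p.1 p.2 ^ 2 ∂(μ.prod μ)) * N ^ 2 := by
      rw [integral_mul_const, hQ]
    have h3 : l2norm2 W = Real.sqrt (∫ p : ℝ × ℝ, W p.1 p.2 ^ 2 ∂(μ.prod μ)) := by
      rw [l2norm2, hprod]
    rw [l2norm, h3]
    calc Real.sqrt (∫ x, g x ^ 2 ∂μ)
        ≤ Real.sqrt ((∫ p : ℝ × ℝ, W p.1 p.2 ^ 2 ∂(μ.prod μ)) * N ^ 2) :=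
          Real.sqrt_le_sqrt (h1.trans_eq h2)
      _ = Real.sqrt (∫ p : ℝ × ℝ, W p.1 p.2 ^ 2 ∂(μ.prod μ)) * N := by
          rw [Real.sqrt_mul hQnn, Real.sqrt_sq hN0]
  -- the pointwise a.e. bound on the difference
  set F : ℝ → ℝ := fun x => (f (u x) t + Kop W D u x) - (f (v x) t + Kop W D v x) with hFdef
  have hDmem : ∀ (z : ℝ → ℝ), MemLp z 2 μ → ∀ c : ℝ,
      MemLp (fun y => D (z y - c)) 2 μ := by
    intro z hz c
    have hm : AEStronglyMeasurable (fun y => D (z y - c)) μ :=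
      hDcont.comp_aestronglyMeasurable (hz.1.sub aestronglyMeasurable_const)
    have hza : MemLp (fun y => LD * |z y|) 2 μ := by
      have := hz.norm.const_mul LD
      simpa [Real.norm_eq_abs] using this
    have hb : MemLp (fun y => (|D 0| + LD * |c|) + LD * |z y|) 2 μ :=
      (memLp_const (|D 0| + LD * |c|)).add hza
    refine hb.of_le hm (ae_of_all _ fun y => ?_)
    rw [Real.norm_eq_abs]
    have h1 : |D (z y - c)| ≤ LD * |z y - c| + |D 0| := by
      have h := hD (z y - c) 0
      rw [sub_zero] at h
      calc |D (z y - c)| ≤ |D (z y - c) - D 0| + |D 0| := by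
            have := abs_sub_abs_le_abs_sub (D (z y - c)) (D 0)
            linarith [abs_nonneg (D 0), le_abs_self (D (z y - c))]
        _ ≤ LD * |z y - c| + |D 0| := by linarith
    have h2 : |z y - c| ≤ |z y| + |c| := abs_sub _ _
    have h3 : LD * |z y - c| ≤ LD * (|z y| + |c|) := mul_le_mul_of_nonneg_left h2 hLD
    refine le_trans ?_ (le_abs_self _)
    calc |D (z y - c)| ≤ LD * |z y - c| + |D 0| := h1
      _ ≤ LD * (|z y| + |c|) + |D 0| := by linarith
      _ = (|D 0| + LD * |c|) + LD * |z y| := by ring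
  have claim : ∀ᵐ x ∂μ, |F x| ≤ Lf * |w x| + (LD * g x + (LD * W2) * |w x|) := by
    filter_upwards [hdeg, hWsec] with x h1 h2
    have hKu : Kop W D u x = ∫ y, W x y * D (u y - u x) ∂μ := rfl
    have hKv : Kop W D v x = ∫ y, W x y * D (v y - v x) ∂μ := rfl
    have hWxi : Integrable (fun y => W x y) μ := h2.integrable one_le_two
    have hDu : Integrable (fun y => W x y * D (u y - u x)) μ := int_mul h2 (hDmem u hu (u x))
    have hDv : Integrable (fun y => W x y * D (v y - v x)) μ := int_mul h2 (hDmem v hv (v x))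
    have hWwa : Integrable (fun y => W x y * |w y|) μ := int_mul h2 hwa
    have hbnd : Integrable (fun y => LD * (W x y * |w y|) + (LD * |w x|) * W x y) μ :=
      (hWwa.const_mul LD).add (hWxi.const_mul _)
    have hK : Kop W D u x - Kop W D v x
        = ∫ y, (W x y * D (u y - u x) - W x y * D (v y - v x)) ∂μ := by
      rw [hKu, hKv, integral_sub hDu hDv]
    have hKabs : |Kop W D u x - Kop W D v x| ≤ LD * g x + (LD * W2) * |w x| := by
      rw [hK]
      have step1 : |∫ y, (W x y * D (u y - u x) - W x y * D (v y - v x)) ∂μ|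
          ≤ ∫ y, |W x y * D (u y - u x) - W x y * D (v y - v x)| ∂μ :=
        by
          have h9 := MeasureTheory.norm_integral_le_integral_norm (μ := μ)
            (fun y : ℝ => W x y * D (u y - u x) - W x y * D (v y - v x))
          simpa [Real.norm_eq_abs] using h9
      have step2 : ∫ y, |W x y * D (u y - u x) - W x y * D (v y - v x)| ∂μ
          ≤ ∫ y, (LD * (W x y * |w y|) + (LD * |w x|) * W x y) ∂μ := by
        refine integral_mono_ae ((hDu.sub hDv).abs) hbnd (ae_of_all _ fun y => ?_)
        show |W x y * D (u y - u x) - W x y * D (v y - v x)|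
          ≤ LD * (W x y * |w y|) + (LD * |w x|) * W x y
        have e : W x y * D (u y - u x) - W x y * D (v y - v x)
            = W x y * (D (u y - u x) - D (v y - v x)) := by ring
        rw [e, abs_mul, abs_of_nonneg (hWnn x y)]
        have hd : |D (u y - u x) - D (v y - v x)| ≤ LD * (|w y| + |w x|) := by
          have h3 := hD (u y - u x) (v y - v x)
          have e2 : (u y - u x) - (v y - v x) = w y - w x := by simp [hwdef]; ring
          rw [e2] at h3
          have h4 : |w y - w x| ≤ |w y| + |w x| := abs_sub _ _
          calc |D (u y - u x) - D (v y - v x)| ≤ LD * |w y - w x| := h3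
            _ ≤ LD * (|w y| + |w x|) := mul_le_mul_of_nonneg_left h4 hLD
        calc W x y * |D (u y - u x) - D (v y - v x)| ≤ W x y * (LD * (|w y| + |w x|)) :=
              mul_le_mul_of_nonneg_left hd (hWnn x y)
          _ = LD * (W x y * |w y|) + (LD * |w x|) * W x y := by ring
      have step3 : ∫ y, (LD * (W x y * |w y|) + (LD * |w x|) * W x y) ∂μ
          = LD * g x + (LD * |w x|) * ∫ y, W x y ∂μ := by
        rw [integral_add (hWwa.const_mul LD) (hWxi.const_mul _), integral_const_mul,
          integral_const_mul]
      have step4 : (LD * |w x|) * ∫ y, W x y ∂μ ≤ (LD * W2) * |w x| := by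
        have h5 : (LD * |w x|) * ∫ y, W x y ∂μ ≤ (LD * |w x|) * W2 :=
          mul_le_mul_of_nonneg_left h1 (mul_nonneg hLD (abs_nonneg _))
        calc (LD * |w x|) * ∫ y, W x y ∂μ ≤ (LD * |w x|) * W2 := h5
          _ = (LD * W2) * |w x| := by ring
      calc |∫ y, (W x y * D (u y - u x) - W x y * D (v y - v x)) ∂μ|
          ≤ ∫ y, (LD * (W x y * |w y|) + (LD * |w x|) * W x y) ∂μ := step1.trans step2
        _ = LD * g x + (LD * |w x|) * ∫ y, W x y ∂μ := step3
        _ ≤ LD * g x + (LD * W2) * |w x| := by linarith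
    have hfu : |f (u x) t - f (v x) t| ≤ Lf * |w x| := hf t (u x) (v x)
    calc |F x| = |(f (u x) t - f (v x) t) + (Kop W D u x - Kop W D v x)| := by
          rw [hFdef]; ring_nf
      _ ≤ |f (u x) t - f (v x) t| + |Kop W D u x - Kop W D v x| := abs_add_le _ _
      _ ≤ Lf * |w x| + (LD * g x + (LD * W2) * |w x|) := by linarith
  -- measurability of F
  have hKm : ∀ (z : ℝ → ℝ), MemLp z 2 μ → AEStronglyMeasurable (fun x => Kop W D z x) μ := by
    intro z hz
    have hp : AEStronglyMeasurable (fun p : ℝ × ℝ => W p.1 p.2 * D (z p.2 - z p.1)) (μ.prod μ) :=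
      hWp.1.mul (hDcont.comp_aestronglyMeasurable (hz.1.comp_snd.sub hz.1.comp_fst))
    exact hp.integral_prod_right'
  have hFm : AEStronglyMeasurable F μ :=
    ((hfcont.comp_aestronglyMeasurable hu.1).add (hKm u hu)).sub
      ((hfcont.comp_aestronglyMeasurable hv.1).add (hKm v hv))
  -- the dominating function G
  set G : ℝ → ℝ := fun x => Lf * |w x| + (LD * g x + (LD * W2) * |w x|) with hGdef
  have hG2 : MemLp G 2 μ := by
    have h1 : MemLp (fun x => Lf * |w x|) 2 μ := hwa.const_mul Lf
    have h2 : MemLp (fun x => LD * g x) 2 μ := hg2.const_mul LD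
    have h3 : MemLp (fun x => (LD * W2) * |w x|) 2 μ := hwa.const_mul (LD * W2)
    exact h1.add (h2.add h3)
  have hFG : l2norm F ≤ l2norm G := l2norm_mono hFm hG2 claim
  have hGbound : l2norm G ≤ Lf * N + (LD * l2norm g + (LD * W2) * N) := by
    have e1 : l2norm (fun x => Lf * |w x|) = Lf * N := by
      rw [l2norm_const_mul, l2norm_abs, abs_of_nonneg hLf]
    have e2 : l2norm (fun x => LD * g x) = LD * l2norm g := by
      rw [l2norm_const_mul, abs_of_nonneg hLD]
    have e3 : l2norm (fun x => (LD * W2) * |w x|) = (LD * W2) * N := by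
      rw [l2norm_const_mul, l2norm_abs, abs_of_nonneg (mul_nonneg hLD hW2)]
    calc l2norm G ≤ l2norm (fun x => Lf * |w x|)
          + l2norm (fun x => LD * g x + (LD * W2) * |w x|) :=
        l2norm_add_le (hwa.const_mul Lf) ((hg2.const_mul LD).add (hwa.const_mul (LD * W2)))
      _ ≤ l2norm (fun x => Lf * |w x|)
          + (l2norm (fun x => LD * g x) + l2norm (fun x => (LD * W2) * |w x|)) := by
        have := l2norm_add_le (hg2.const_mul LD) (hwa.const_mul (LD * W2))
        linarith
      _ = Lf * N + (LD * l2norm g + (LD * W2) * N) := by rw [e1, e2, e3]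
  have final : l2norm F ≤ (Lf + LD * (l2norm2 W + W2)) * N := by
    have h6 : LD * l2norm g ≤ LD * (l2norm2 W * N) := mul_le_mul_of_nonneg_left hgl2 hLD
    calc l2norm F ≤ Lf * N + (LD * l2norm g + (LD * W2) * N) := hFG.trans hGbound
      _ ≤ Lf * N + (LD * (l2norm2 W * N) + (LD * W2) * N) := by linarith
      _ = (Lf + LD * (l2norm2 W + W2)) * N := by ring
  exact final
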